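/- Let $m \geq 5$ with $m \equiv 2 \pmod 3$ and let $P_m$ be the vertex set of a regular $m$-gon inscribed in the unit circle with the geodesic metric. Then for every partition of $P_m$ into three nonempty subsets $X_1, X_2, X_3$, we have $\max_i \operatorname{diam} X_i \geq \frac{2\pi}{3} - \frac{4\pi}{3m}$, and this bound is attained by some partition. -/

import Mathlib

open Real

/-- Vertex set of the regular `n`-gon inscribed in the unit circle, modeled inside
`AddCircle (2π)` whose quotient metric is exactly the geodesic metric
`d(α,β) = min (|α-β|) (2π - |α-β|)`. -/
noncomputable def Pvert (n : ℕ) : Set (AddCircle (2 * π)) :=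
  Set.range fun j : Fin n => ((2 * π * j / n : ℝ) : AddCircle (2 * π))

instance (n : ℕ) : Finite (Pvert n) := by unfold Pvert; exact (Set.finite_range _).to_subtype

/-- circular step distance between residues -/
def csd (m : ℕ) (Δ : ℤ) : ℤ := min (Δ % m) ((-Δ) % m)

lemma csd_nonneg (m : ℕ) (hm : 0 < m) (Δ : ℤ) : 0 ≤ csd m Δ :=
  le_min (Int.emod_nonneg _ (by exact_mod_cast hm.ne')) (Int.emod_nonneg _ (by exact_mod_cast hm.ne'))

lemma int_eq_of_dvd (m x y : ℤ) (hdvd : m ∣ x - y) (h : |x| + |y| < m) : x = y := by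
  have h1 : |x - y| < m := lt_of_le_of_lt (abs_sub x y) h
  have := Int.eq_zero_of_abs_lt_dvd hdvd h1
  omega

lemma emod_le_self' (m : ℕ) (hm : 0 < m) (t : ℤ) (ht : 0 ≤ t) : t % m ≤ t := by
  have h1 := Int.mul_ediv_add_emod t m
  have h2 : 0 ≤ t / m := Int.ediv_nonneg ht (by positivity)
  nlinarith [mul_nonneg (show (0:ℤ) ≤ m by positivity) h2]

lemma csd_le_abs (m : ℕ) (hm : 0 < m) (Δ t : ℤ) (h : (m:ℤ) ∣ Δ - t) : csd m Δ ≤ |t| := by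
  have hm' : (m:ℤ) ≠ 0 := by exact_mod_cast hm.ne'
  rcases le_or_gt 0 t with ht | ht
  · have h1 : Δ % m = t % m := Int.ModEq.symm (Int.modEq_iff_dvd.mpr h)
    calc csd m Δ ≤ Δ % m := min_le_left _ _
    _ = t % m := h1
    _ ≤ t := emod_le_self' m hm t ht
    _ ≤ |t| := le_abs_self t
  · have h' : (m:ℤ) ∣ (-Δ) - (-t) := by
      have e : (-Δ) - (-t) = -(Δ - t) := by ring
      rw [e]; exact dvd_neg.mpr h
    have h1 : (-Δ) % m = (-t) % m := Int.ModEq.symm (Int.modEq_iff_dvd.mpr h')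
    calc csd m Δ ≤ (-Δ) % m := min_le_right _ _
    _ = (-t) % m := h1
    _ ≤ -t := emod_le_self' m hm (-t) (by omega)
    _ ≤ |t| := by rw [abs_of_neg ht]

lemma csd_rep (m : ℕ) (hm : 0 < m) (Δ : ℤ) : ∃ s : ℤ, (m:ℤ) ∣ Δ - s ∧ |s| = csd m Δ := by
  have hm' : (m:ℤ) ≠ 0 := by exact_mod_cast hm.ne'
  rcases le_total (Δ % m) ((-Δ) % m) with h | h
  · refine ⟨Δ % m, ⟨Δ / m, by have := Int.mul_ediv_add_emod Δ m; linarith⟩, ?_⟩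
    rw [abs_of_nonneg (Int.emod_nonneg _ hm'), csd, min_eq_left h]
  · refine ⟨-((-Δ) % m), ⟨-((-Δ) / m), by have := Int.mul_ediv_add_emod (-Δ) m; linarith⟩, ?_⟩
    rw [abs_neg, abs_of_nonneg (Int.emod_nonneg _ hm'), csd, min_eq_right h]

lemma csd_eq_zero (m : ℕ) (hm : 0 < m) (Δ : ℤ) (h : csd m Δ = 0) : (m:ℤ) ∣ Δ := by
  obtain ⟨s, hs1, hs2⟩ := csd_rep m hm Δ
  rw [h, abs_eq_zero] at hs2
  simpa [hs2] using hs1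

lemma csd_natCast (m d : ℕ) (hm : 0 < m) (hd : 2 * d ≤ m) : csd m (d:ℤ) = d := by
  have h1 : (d:ℤ) % m = d := Int.emod_eq_of_lt (by positivity) (by omega)
  rcases Nat.eq_zero_or_pos d with rfl | hd0
  · simp [csd]
  · have h2 : (-(d:ℤ)) % m = m - d := by
      have e : (-(d:ℤ)) = ((m:ℤ) - d) + m * (-1) := by ring
      rw [e, Int.add_mul_emod_self_left]
      exact Int.emod_eq_of_lt (by omega) (by omega)
    rw [csd, h1, h2, min_eq_left (by omega)]

lemma norm_coe_eq (m : ℕ) (hm : 0 < m) (Δ : ℤ) :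
    ‖((2 * π * Δ / m : ℝ) : AddCircle (2 * π))‖ = 2 * π / m * csd m Δ := by
  have hm0 : (m:ℝ) ≠ 0 := Nat.cast_ne_zero.mpr hm.ne'
  have hpos : (0:ℝ) < 2 * π / m := by positivity
  apply le_antisymm
  · obtain ⟨s, hdvd, habs⟩ := csd_rep m hm Δ
    obtain ⟨t, ht⟩ := hdvd
    have hcoe : ((2 * π * Δ / m : ℝ) : AddCircle (2 * π))
        = ((2 * π * s / m : ℝ) : AddCircle (2 * π)) := by
      rw [QuotientAddGroup.eq_iff_sub_mem, AddSubgroup.mem_zmultiples_iff]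
      refine ⟨t, ?_⟩
      have h3 : ((Δ:ℝ) - s) = (m:ℝ) * t := by exact_mod_cast congrArg (Int.cast : ℤ → ℝ) ht
      rw [zsmul_eq_mul]
      field_simp
      linear_combination (-1) * h3
    rw [hcoe]
    calc ‖((2 * π * s / m : ℝ) : AddCircle (2 * π))‖ ≤ ‖(2 * π * s / m : ℝ)‖ :=
          QuotientAddGroup.norm_mk_le_norm
    _ = 2 * π / m * csd m Δ := by
        rw [Real.norm_eq_abs, ← habs]
        rw [abs_div, abs_mul]
        rw [abs_of_pos two_pi_pos, Nat.abs_cast]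
        push_cast
        ring
  · rw [AddCircle.norm_eq]
    set q := round ((2 * π)⁻¹ * (2 * π * Δ / m)) with hq
    have he : (2 * π * Δ / m : ℝ) - q * (2 * π) = 2 * π / m * ((Δ : ℝ) - q * m) := by
      field_simp
    rw [he, abs_mul, abs_of_pos hpos]
    have h1 : csd m Δ ≤ |Δ - q * m| := csd_le_abs m hm Δ (Δ - q * m) ⟨q, by ring⟩
    have h2 : ((csd m Δ : ℤ) : ℝ) ≤ |((Δ:ℝ) - q * m)| := by
      have h3 : |((Δ:ℝ) - q * m)| = ((|Δ - q * m| : ℤ) : ℝ) := by push_cast; ring_nf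
      rw [h3]; exact_mod_cast h1
    exact mul_le_mul_of_nonneg_left h2 hpos.le

lemma dist_vert (m : ℕ) (hm : 0 < m) (j j' : Fin m) :
    dist (((2 * π * j / m : ℝ) : AddCircle (2 * π))) (((2 * π * j' / m : ℝ) : AddCircle (2 * π)))
      = 2 * π / m * csd m ((j:ℤ) - (j':ℤ)) := by
  rw [dist_eq_norm]
  have h : ((2 * π * j / m : ℝ) : AddCircle (2*π)) - ((2 * π * j' / m : ℝ) : AddCircle (2*π))
      = ((2 * π * (((j:ℤ) - (j':ℤ)) : ℤ) / m : ℝ) : AddCircle (2*π)) := by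
    rw [← QuotientAddGroup.mk_sub]
    congr 1
    push_cast
    ring
  rw [h, norm_coe_eq m hm]

lemma pigeon (m k : ℕ) (hmk : m = 3 * k + 2) (hk : 1 ≤ k) (c : Fin m → Fin 3) :
    ∃ j j' : Fin m, c j = c j' ∧ (k:ℤ) ≤ csd m ((j:ℤ) - (j':ℤ)) := by
  by_contra hcon
  push_neg at hcon
  have hm : 0 < m := by omega
  have hcon' : ∀ j j' : Fin m, c j = c j' → csd m ((j:ℤ) - (j':ℤ)) ≤ (k:ℤ) - 1 := by
    intro j j' h; have := hcon j j' h; omega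
  have hrep : ∀ j j' : Fin m, c j = c j' →
      ∃ s : ℤ, (m:ℤ) ∣ ((j:ℤ) - (j':ℤ)) - s ∧ |s| ≤ (k:ℤ) - 1 := by
    intro j j' h
    obtain ⟨s, h1, h2⟩ := csd_rep m hm ((j:ℤ) - (j':ℤ))
    exact ⟨s, h1, by rw [h2]; exact hcon' j j' h⟩
  have key : ∀ i : Fin 3, (Finset.univ.filter (fun j => c j = i)).card ≤ k := by
    intro i
    set S := Finset.univ.filter (fun j => c j = i) with hS
    rcases S.eq_empty_or_nonempty with he | hne
    · simp [he]
    obtain ⟨a, ha⟩ := hne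
    have hcol : ∀ b ∈ S, c b = i := by
      intro b hb; simpa [hS] using hb
    set ρ : Fin m → ℤ := fun b =>
      if ((b:ℤ) - (a:ℤ)) % m ≤ (k:ℤ) - 1 then ((b:ℤ) - (a:ℤ)) % m
      else ((b:ℤ) - (a:ℤ)) % m - m with hρ
    have hdvdρ : ∀ b : Fin m, (m:ℤ) ∣ ((b:ℤ) - (a:ℤ)) - ρ b := by
      intro b
      have hd : (m:ℤ) ∣ ((b:ℤ) - (a:ℤ)) - ((b:ℤ) - (a:ℤ)) % m :=
        ⟨((b:ℤ) - (a:ℤ)) / m, by have := Int.mul_ediv_add_emod ((b:ℤ) - (a:ℤ)) m; linarith⟩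
      by_cases hc : ((b:ℤ) - (a:ℤ)) % m ≤ (k:ℤ) - 1
      · simpa only [hρ, hc, if_true] using hd
      · simp only [hρ, hc, if_false]
        obtain ⟨t, ht⟩ := hd
        exact ⟨t + 1, by linarith⟩
    have hboundρ : ∀ b ∈ S, |ρ b| ≤ (k:ℤ) - 1 := by
      intro b hb
      have hmm : (m:ℤ) ≠ 0 := by exact_mod_cast hm.ne'
      have h0 : 0 ≤ ((b:ℤ) - (a:ℤ)) % m := Int.emod_nonneg _ hmm
      have h1 : ((b:ℤ) - (a:ℤ)) % m < m := Int.emod_lt_of_pos _ (by exact_mod_cast hm)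
      by_cases hc : ((b:ℤ) - (a:ℤ)) % m ≤ (k:ℤ) - 1
      · simp only [hρ, hc, if_true]; rw [abs_of_nonneg h0]; exact hc
      · simp only [hρ, hc, if_false]
        obtain ⟨s, hs1, hs2⟩ := hrep b a (by rw [hcol b hb, hcol a ha])
        have hds : (m:ℤ) ∣ (((b:ℤ) - (a:ℤ)) % m - m) - s := by
          obtain ⟨t, ht⟩ := hs1
          obtain ⟨u, hu⟩ := hdvdρ b
          simp only [hρ, hc, if_false] at hu
          exact ⟨t - u, by linarith⟩
        have habs : |((b:ℤ) - (a:ℤ)) % m - m| ≤ (m:ℤ) - k := by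
          rw [abs_of_nonpos (by linarith)]
          push_neg at hc
          omega
        have heq : ((b:ℤ) - (a:ℤ)) % m - m = s := by
          apply int_eq_of_dvd m _ _ hds
          have hk' : (1:ℤ) ≤ k := by exact_mod_cast hk
          omega
        rw [heq]; exact hs2
    have hpair : ∀ b ∈ S, ∀ b' ∈ S, |ρ b - ρ b'| ≤ (k:ℤ) - 1 := by
      intro b hb b' hb'
      obtain ⟨s, hs1, hs2⟩ := hrep b b' (by rw [hcol b hb, hcol b' hb'])
      have hd : (m:ℤ) ∣ (ρ b - ρ b') - s := by
        obtain ⟨u, hu⟩ := hdvdρ b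
        obtain ⟨u', hu'⟩ := hdvdρ b'
        obtain ⟨t, ht⟩ := hs1
        exact ⟨t - u + u', by linarith⟩
      have heq : ρ b - ρ b' = s := by
        apply int_eq_of_dvd m _ _ hd
        have h1 := hboundρ b hb
        have h2 := hboundρ b' hb'
        have hm3 : (m:ℤ) = 3 * k + 2 := by exact_mod_cast hmk
        have := abs_sub (ρ b) (ρ b')
        omega
      rw [heq]; exact hs2
    have hinj : Set.InjOn ρ S := by
      intro b hb b' hb' hbb
      have hd : (m:ℤ) ∣ (b:ℤ) - (b':ℤ) := by
        obtain ⟨u, hu⟩ := hdvdρ b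
        obtain ⟨u', hu'⟩ := hdvdρ b'
        exact ⟨u - u', by rw [hbb] at hu; linarith⟩
      have hb1 : ((b:ℤ) - (b':ℤ)) = 0 := by
        apply Int.eq_zero_of_abs_lt_dvd hd
        have h1 : ((b:ℤ)) < m := by exact_mod_cast b.isLt
        have h2 : ((b':ℤ)) < m := by exact_mod_cast b'.isLt
        have h3 : 0 ≤ ((b:ℤ)) := by positivity
        have h4 : 0 ≤ ((b':ℤ)) := by positivity
        rw [abs_lt]
        constructor <;> omega
      exact Fin.ext (by omega)
    have hcard : S.card = (S.image ρ).card := (Finset.card_image_of_injOn hinj).symm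
    have hne' : (S.image ρ).Nonempty := ⟨ρ a, Finset.mem_image_of_mem ρ ha⟩
    set M := (S.image ρ).max' hne' with hM
    have hsub : S.image ρ ⊆ Finset.Icc (M - ((k:ℤ) - 1)) M := by
      intro x hx
      obtain ⟨b, hb, rfl⟩ := Finset.mem_image.mp hx
      obtain ⟨b', hb', hMb⟩ := Finset.mem_image.mp ((S.image ρ).max'_mem hne')
      rw [Finset.mem_Icc]
      constructor
      · have h5 := hpair b' hb' b hb
        rw [abs_le] at h5
        rw [hM, ← hMb]
        omega
      · exact Finset.le_max' _ _ hx
    calc S.card = (S.image ρ).card := hcard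
    _ ≤ (Finset.Icc (M - ((k:ℤ) - 1)) M).card := Finset.card_le_card hsub
    _ = k := by
        rw [Int.card_Icc]
        have hk' : (1:ℤ) ≤ k := by exact_mod_cast hk
        omega
  have htotal : (Finset.univ : Finset (Fin m)).card
      = ∑ i : Fin 3, (Finset.univ.filter (fun j => c j = i)).card :=
    Finset.card_eq_sum_card_fiberwise (fun x _ => Finset.mem_univ (c x))
  rw [Finset.card_univ, Fintype.card_fin, Fin.sum_univ_three] at htotal
  have h0 := key 0; have h1 := key 1; have h2 := key 2
  omega

theorem stmt10 (m : ℕ) (hm : 5 ≤ m) (hmod : m % 3 = 2) :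
    (∀ X : Fin 3 → Set (Pvert m), (∀ i, (X i).Nonempty) →
      Pairwise (Function.onFun Disjoint X) → (⋃ i, X i) = Set.univ →
      (2 * π / 3 - 4 * π / (3 * m)) ≤ ⨆ i, Metric.diam (X i)) ∧
    (∃ X : Fin 3 → Set (Pvert m), (∀ i, (X i).Nonempty) ∧
      Pairwise (Function.onFun Disjoint X) ∧ (⋃ i, X i) = Set.univ ∧
      (⨆ i, Metric.diam (X i)) = (2 * π / 3 - 4 * π / (3 * m))) := by
  have hπ := Real.pi_pos
  set k := m / 3 with hk
  have hmk : m = 3 * k + 2 := by omega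
  have hk1 : 1 ≤ k := by omega
  have hm0 : 0 < m := by omega
  have hmr : (m:ℝ) ≠ 0 := Nat.cast_ne_zero.mpr hm0.ne'
  have hbound : 2 * π / 3 - 4 * π / (3 * m) = 2 * π / m * k := by
    have hmr2 : (m:ℝ) = 3 * k + 2 := by exact_mod_cast hmk
    field_simp
    rw [hmr2]; ring
  set vtx : Fin m → Pvert m :=
    fun j => ⟨((2 * π * j / m : ℝ) : AddCircle (2 * π)), Set.mem_range_self j⟩ with hvtx
  have hdist : ∀ j j' : Fin m,
      dist (vtx j) (vtx j') = 2 * π / m * csd m ((j:ℤ) - (j':ℤ)) := by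
    intro j j'
    rw [Subtype.dist_eq]
    exact dist_vert m hm0 j j'
  have hsurj : ∀ x : Pvert m, ∃ j, vtx j = x := by
    rintro ⟨x, hx⟩
    obtain ⟨j, hj⟩ := hx
    exact ⟨j, Subtype.ext hj⟩
  have hbdd : ∀ A : Set (Pvert m), Bornology.IsBounded A := fun A => A.toFinite.isBounded
  constructor
  · intro X hne hdisj huniv
    have hc : ∀ j : Fin m, ∃ i, vtx j ∈ X i := by
      intro j
      have h1 : vtx j ∈ ⋃ i, X i := huniv ▸ Set.mem_univ _
      exact Set.mem_iUnion.mp h1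
    choose c hcmem using hc
    obtain ⟨j, j', hcc, hcsd⟩ := pigeon m k hmk hk1 c
    have hd : 2 * π / 3 - 4 * π / (3 * m) ≤ dist (vtx j) (vtx j') := by
      rw [hdist, hbound]
      have h1 : ((k:ℤ):ℝ) ≤ ((csd m ((j:ℤ)-(j':ℤ)) : ℤ) : ℝ) := by exact_mod_cast hcsd
      have h2 := mul_le_mul_of_nonneg_left h1 (le_of_lt (by positivity : (0:ℝ) < 2*π/m))
      push_cast at h2 ⊢
      linarith
    have hdiam : dist (vtx j) (vtx j') ≤ Metric.diam (X (c j)) := by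
      apply Metric.dist_le_diam_of_mem (hbdd _) (hcmem j)
      rw [hcc]; exact hcmem j'
    calc 2 * π / 3 - 4 * π / (3 * m) ≤ Metric.diam (X (c j)) := le_trans hd hdiam
    _ ≤ ⨆ i, Metric.diam (X i) := le_ciSup (f := fun i => Metric.diam (X i)) (Finite.bddAbove_range _) (c j)
  · set f : Fin m → Fin 3 :=
      fun j => if (j:ℕ) < k + 1 then 0 else if (j:ℕ) < 2*k+2 then 1 else 2 with hf
    set X : Fin 3 → Set (Pvert m) := fun i => vtx '' {j | f j = i} with hX
    have hinj : Function.Injective vtx := by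
      intro j j' h
      have hz : dist (vtx j) (vtx j') = 0 := by rw [h]; simp
      rw [hdist] at hz
      have hcz : ((csd m ((j:ℤ)-(j':ℤ)) : ℤ) : ℝ) = 0 := by
        rcases mul_eq_zero.mp hz with h1 | h1
        · exact absurd h1 (by positivity)
        · exact h1
      have hcz' : csd m ((j:ℤ)-(j':ℤ)) = 0 := by exact_mod_cast hcz
      have hdvd := csd_eq_zero m hm0 _ hcz'
      have hb1 : ((j:ℤ) - (j':ℤ)) = 0 := by
        apply Int.eq_zero_of_abs_lt_dvd hdvd
        have h1 : ((j:ℤ)) < m := by exact_mod_cast j.isLt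
        have h2 : ((j':ℤ)) < m := by exact_mod_cast j'.isLt
        have h3 : 0 ≤ ((j:ℤ)) := by positivity
        have h4 : 0 ≤ ((j':ℤ)) := by positivity
        rw [abs_lt]
        constructor <;> omega
      exact Fin.ext (by omega)
    have hfb : ∀ j j' : Fin m, f j = f j' → ((j:ℤ) - (j':ℤ)).natAbs ≤ k := by
      intro j j' h
      have hj := j.isLt
      have hj' := j'.isLt
      simp only [hf] at h
      split_ifs at h <;> omega
    have hdiamle : ∀ i, Metric.diam (X i) ≤ 2 * π / m * k := by
      intro i
      apply Metric.diam_le_of_forall_dist_le (by positivity)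
      rintro x ⟨j, hj, rfl⟩ y ⟨j', hj', rfl⟩
      rw [hdist]
      have h1 : csd m ((j:ℤ) - (j':ℤ)) ≤ (k:ℤ) := by
        have h2 := csd_le_abs m hm0 ((j:ℤ)-(j':ℤ)) ((j:ℤ)-(j':ℤ)) (by simp)
        have h3 := hfb j j' (hj.trans hj'.symm)
        rw [Int.abs_eq_natAbs] at h2
        omega
      have h4 : ((csd m ((j:ℤ)-(j':ℤ)) : ℤ) : ℝ) ≤ (k:ℝ) := by exact_mod_cast h1
      have h5 := mul_le_mul_of_nonneg_left h4 (le_of_lt (by positivity : (0:ℝ) < 2*π/m))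
      linarith
    refine ⟨X, ?_, ?_, ?_, ?_⟩
    · intro i
      fin_cases i
      · exact ⟨vtx ⟨0, by omega⟩, ⟨0, by omega⟩,
          by simp only [hf, Set.mem_setOf_eq]; rw [if_pos (Nat.succ_pos k)]; rfl, rfl⟩
      · exact ⟨vtx ⟨k+1, by omega⟩, ⟨k+1, by omega⟩,
          by simp only [hf, Set.mem_setOf_eq]
             rw [if_neg (Nat.lt_irrefl (k+1)), if_pos (by exact (by omega : k+1 < 2*k+2))]; rfl, rfl⟩
      · exact ⟨vtx ⟨2*k+2, by omega⟩, ⟨2*k+2, by omega⟩,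
          by simp only [hf, Set.mem_setOf_eq]
             rw [if_neg (by exact (by omega : ¬(2*k+2 < k+1))), if_neg (Nat.lt_irrefl (2*k+2))]; rfl, rfl⟩
    · intro i i' hii
      simp only [Function.onFun, hX]
      rw [Set.disjoint_left]
      rintro x ⟨j, hj, rfl⟩ ⟨j', hj', he⟩
      exact hii (by rw [← hj, ← hj', hinj he])
    · ext x
      simp only [Set.mem_iUnion, Set.mem_univ, iff_true]
      obtain ⟨j, rfl⟩ := hsurj x
      exact ⟨f j, j, rfl, rfl⟩
    · apply le_antisymm
      · rw [hbound]
        exact ciSup_le hdiamle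
      · rw [hbound]
        have hkm : k < m := by omega
        have h0m : 0 < m := hm0
        have hmem1 : vtx ⟨k, hkm⟩ ∈ X 0 := ⟨⟨k, hkm⟩,
          by simp only [hf, Set.mem_setOf_eq]; rw [if_pos (Nat.lt_succ_self k)], rfl⟩
        have hmem2 : vtx ⟨0, h0m⟩ ∈ X 0 := ⟨⟨0, h0m⟩,
          by simp only [hf, Set.mem_setOf_eq]; rw [if_pos (Nat.succ_pos k)], rfl⟩
        have hdd : dist (vtx ⟨k, hkm⟩) (vtx ⟨0, h0m⟩) = 2 * π / m * k := by
          rw [hdist]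
          have e1 : (((⟨k, hkm⟩ : Fin m):ℤ) - ((⟨0, h0m⟩ : Fin m):ℤ)) = (k:ℤ) := by simp
          rw [e1, csd_natCast m k hm0 (by omega)]
          norm_cast
        calc 2 * π / m * (k:ℝ) = dist (vtx ⟨k, hkm⟩) (vtx ⟨0, h0m⟩) := hdd.symm
        _ ≤ Metric.diam (X 0) := Metric.dist_le_diam_of_mem (hbdd _) hmem1 hmem2
        _ ≤ ⨆ i, Metric.diam (X i) := le_ciSup (f := fun i => Metric.diam (X i)) (Finite.bddAbove_range _) (0 : Fin 3)
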